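/- Let p, q, r be natural numbers with 2r ≤ p + q. Then every antichain A (with respect to set inclusion) contained in the ball B_r[p,q] satisfies |A| ≤ Σ_{l=0}^{⌊r/2⌋} max{ C(p,i)·C(q,j) : i + j = r − 2l }. That is, the width of B_r[p,q] is at most the sum of the widths of the spheres of radii r, r−2, r−4, …, each of which equals the size of that sphere's largest layer. -/
import Mathlib

open Finset

namespace Stmt9

variable (p q : ℕ)

def XX (p q i j : ℕ) : Finset (Finset ℕ) :=
  ((Finset.Icc 1 (p+q)).powerset).filter
    (fun S => ((Finset.Icc 1 p) \ S).card = i ∧ (S \ (Finset.Icc 1 p)).card = j)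

lemma mem_XX {p q i j : ℕ} {S : Finset ℕ} :
    S ∈ XX p q i j ↔ S ⊆ Finset.Icc 1 (p+q) ∧ ((Finset.Icc 1 p) \ S).card = i ∧
      (S \ (Finset.Icc 1 p)).card = j := by
  simp [XX, Finset.mem_filter, Finset.mem_powerset, and_assoc]

lemma P_subset_U : Finset.Icc 1 p ⊆ Finset.Icc 1 (p+q) := by
  apply Finset.Icc_subset_Icc le_rfl (Nat.le_add_right _ _)

lemma recover1 {P a b : Finset ℕ} (ha : a ⊆ P) (hb : ∀ x ∈ b, x ∉ P) :
    P \ ((P \ a) ∪ b) = a := by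
  ext x
  simp only [Finset.mem_sdiff, Finset.mem_union, not_or, not_and, not_not]
  constructor
  · rintro ⟨hxP, h1, _⟩
    exact h1 hxP
  · intro hx
    exact ⟨ha hx, fun _ => hx, fun h => (hb x h) (ha hx)⟩

lemma recover2 {P a b : Finset ℕ} (hb : ∀ x ∈ b, x ∉ P) :
    ((P \ a) ∪ b) \ P = b := by
  ext x
  simp only [Finset.mem_sdiff, Finset.mem_union]
  constructor
  · rintro ⟨h | h, hxP⟩
    · exact absurd h.1 hxP
    · exact h
  · intro hx
    exact ⟨Or.inr hx, hb x hx⟩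

lemma XX_card (i j : ℕ) : (XX p q i j).card = p.choose i * q.choose j := by
  classical
  set P := Finset.Icc 1 p with hP
  set U := Finset.Icc 1 (p+q) with hU
  have hPU : P ⊆ U := P_subset_U p q
  have hcard : (XX p q i j).card =
      ((P.powersetCard i) ×ˢ ((U \ P).powersetCard j)).card := by
    apply Finset.card_bij' (fun S _ => (P \ S, S \ P))
      (fun a _ => (P \ a.1) ∪ a.2)
    · intro S hS
      rw [mem_XX] at hS
      obtain ⟨hSU, hi, hj⟩ := hS
      simp only [Finset.mem_product, Finset.mem_powersetCard]
      refine ⟨⟨Finset.sdiff_subset, hi⟩, ?_, hj⟩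
      intro x hx
      simp only [Finset.mem_sdiff] at hx ⊢
      exact ⟨hSU hx.1, hx.2⟩
    · intro a ha
      simp only [Finset.mem_product, Finset.mem_powersetCard] at ha
      obtain ⟨⟨ha1, ha2⟩, hb1, hb2⟩ := ha
      rw [mem_XX]
      have hbP : Disjoint a.2 P := by
        intro t ht1 ht2 x hx
        have := ht1 hx; have := ht2 hx
        have := hb1 (ht1 hx)
        simp only [Finset.mem_sdiff] at this
        exact absurd (ht2 hx) this.2
      refine ⟨?_, ?_, ?_⟩
      · intro x hx
        rcases Finset.mem_union.1 hx with h | h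
        · exact hPU (Finset.mem_sdiff.1 h).1
        · exact (Finset.mem_sdiff.1 (hb1 h)).1
      · rw [recover1 ha1 (fun x hx => (Finset.mem_sdiff.1 (hb1 hx)).2), ha2]
      · rw [recover2 (fun x hx => (Finset.mem_sdiff.1 (hb1 hx)).2), hb2]
    · intro S hS
      rw [mem_XX] at hS
      obtain ⟨hSU, hi, hj⟩ := hS
      ext x
      simp only [Finset.mem_union, Finset.mem_sdiff, not_and, not_not]
      constructor
      · rintro (⟨hxP, h⟩ | ⟨hxS, _⟩)
        · exact h hxP
        · exact hxS
      · intro hxS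
        by_cases hxP : x ∈ P
        · exact Or.inl ⟨hxP, fun _ => hxS⟩
        · exact Or.inr ⟨hxS, hxP⟩
    · intro a ha
      simp only [Finset.mem_product, Finset.mem_powersetCard] at ha
      obtain ⟨⟨ha1, _⟩, hb1, _⟩ := ha
      rw [Prod.ext_iff]
      exact ⟨recover1 ha1 (fun x hx => (Finset.mem_sdiff.1 (hb1 hx)).2),
        recover2 (fun x hx => (Finset.mem_sdiff.1 (hb1 hx)).2)⟩
  rw [hcard, Finset.card_product, Finset.card_powersetCard, Finset.card_powersetCard,
    Finset.card_sdiff_of_subset hPU, Nat.card_Icc, Nat.card_Icc]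
  congr 2
  omega

lemma XX_nonempty_iff (i j : ℕ) : (XX p q i j).Nonempty ↔ i ≤ p ∧ j ≤ q := by
  rw [← Finset.card_pos, XX_card]
  constructor
  · intro h
    constructor
    · by_contra hc
      simp [Nat.choose_eq_zero_of_lt (by omega : p < i)] at h
    · by_contra hc
      simp [Nat.choose_eq_zero_of_lt (by omega : q < j)] at h
  · rintro ⟨h1, h2⟩
    exact Nat.mul_pos (Nat.choose_pos h1) (Nat.choose_pos h2)




section Degrees

-- basic card facts for members of XX
lemma XX_inter_card {i j : ℕ} {z : Finset ℕ} (hz : z ∈ XX p q i j) :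
    i + (Finset.Icc 1 p ∩ z).card = p := by
  obtain ⟨hU, hi, hj⟩ := mem_XX.1 hz
  have h := Finset.card_sdiff_add_card_inter (Finset.Icc 1 p) z
  rw [hi] at h
  have h2 : (Finset.Icc 1 p).card = p := by simp
  omega

lemma XX_card_eq {i j : ℕ} {z : Finset ℕ} (hz : z ∈ XX p q i j) :
    z.card + i = p + j := by
  obtain ⟨hU, hi, hj⟩ := mem_XX.1 hz
  have h1 := XX_inter_card p q hz
  have h2 := Finset.card_sdiff_add_card_inter z (Finset.Icc 1 p)
  rw [hj, Finset.inter_comm] at h2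
  omega

-- For z ⊆ z' in consecutive layers, z' = insert e z
lemma step_exists {i j i' j' : ℕ} {z z' : Finset ℕ} (hz : z ∈ XX p q i j)
    (hz' : z' ∈ XX p q i' j') (hss : z ⊂ z') (hcard : z.card + 1 = z'.card) :
    ∃ e ∈ z', e ∉ z ∧ z' = insert e z := by
  have hsub := hss.subset
  have : (z' \ z).card = 1 := by
    rw [Finset.card_sdiff_of_subset hsub]; omega
  obtain ⟨e, he⟩ := Finset.card_eq_one.1 this
  have heS : e ∈ z' \ z := by rw [he]; exact Finset.mem_singleton_self e
  rw [Finset.mem_sdiff] at heS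
  refine ⟨e, heS.1, heS.2, ?_⟩
  refine (Finset.eq_of_subset_of_card_le ?_ ?_).symm
  · intro x hx
    rcases Finset.mem_insert.1 hx with h | h
    · exact h ▸ heS.1
    · exact hsub h
  · rw [Finset.card_insert_of_notMem heS.2]; omega

-- down-degree, P-type : i-layer sits above (i+1)-layer
lemma downP {i j : ℕ} {z' : Finset ℕ} (hz' : z' ∈ XX p q i j) :
    ((XX p q (i+1) j).filter (fun z => z ⊂ z')).card = p - i := by
  classical
  obtain ⟨hU, hi, hj⟩ := mem_XX.1 hz'
  have hinter := XX_inter_card p q hz'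
  have hzc := XX_card_eq p q hz'
  rw [show p - i = (Finset.Icc 1 p ∩ z').card by omega]
  symm
  apply Finset.card_bij (fun e _ => z'.erase e)
  · intro e he
    rw [Finset.mem_inter] at he
    rw [Finset.mem_filter]
    refine ⟨mem_XX.2 ⟨(Finset.erase_subset _ _).trans hU, ?_, ?_⟩,
      Finset.erase_ssubset he.2⟩
    · have : Finset.Icc 1 p \ z'.erase e = insert e (Finset.Icc 1 p \ z') := by
        ext x
        simp only [Finset.mem_sdiff, Finset.mem_erase, Finset.mem_insert, not_and, not_not]
        constructor
        · rintro ⟨hxP, hcy⟩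
          by_cases hxe : x = e
          · exact Or.inl hxe
          · exact Or.inr ⟨hxP, hcy hxe⟩
        · rintro (rfl | ⟨h1, h2⟩)
          · exact ⟨he.1, fun h => absurd rfl h⟩
          · exact ⟨h1, fun _ => h2⟩
      rw [this, Finset.card_insert_of_notMem (by simp [he.2]), hi]
    · have : z'.erase e \ Finset.Icc 1 p = z' \ Finset.Icc 1 p := by
        ext x
        simp only [Finset.mem_sdiff, Finset.mem_erase]
        constructor
        · rintro ⟨⟨_, h⟩, h2⟩
          exact ⟨h, h2⟩
        · rintro ⟨h1, h2⟩
          exact ⟨⟨fun hxe => h2 (hxe ▸ he.1), h1⟩, h2⟩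
      rw [this, hj]
  · intro e1 h1 e2 h2 heq
    by_contra hne
    have h3 : e1 ∈ z'.erase e2 := Finset.mem_erase.2 ⟨hne, (Finset.mem_inter.1 h1).2⟩
    rw [← heq] at h3
    exact (Finset.mem_erase.1 h3).1 rfl
  · intro z hzf
    rw [Finset.mem_filter] at hzf
    obtain ⟨hzX, hss⟩ := hzf
    have hczz : z.card + 1 = z'.card := by
      have := XX_card_eq p q hzX; omega
    obtain ⟨e, he1, he2, he3⟩ := step_exists p q hzX hz' hss hczz
    have heP : e ∈ Finset.Icc 1 p := by
      by_contra heP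
      obtain ⟨_, _, hjz⟩ := mem_XX.1 hzX
      have hzsub : z \ Finset.Icc 1 p ⊆ z' \ Finset.Icc 1 p :=
        fun x hx => Finset.mem_sdiff.2 ⟨hss.subset (Finset.mem_sdiff.1 hx).1,
          (Finset.mem_sdiff.1 hx).2⟩
      have : z \ Finset.Icc 1 p = z' \ Finset.Icc 1 p :=
        Finset.eq_of_subset_of_card_le hzsub (by rw [hjz, hj])
      have : e ∈ z \ Finset.Icc 1 p := by
        rw [this, Finset.mem_sdiff]; exact ⟨he1, heP⟩
      exact he2 (Finset.mem_sdiff.1 this).1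
    refine ⟨e, Finset.mem_inter.2 ⟨heP, he1⟩, ?_⟩
    rw [he3, Finset.erase_insert he2]

-- down-degree, Q-type
lemma downQ {i j : ℕ} {z' : Finset ℕ} (hz' : z' ∈ XX p q i (j+1)) :
    ((XX p q i j).filter (fun z => z ⊂ z')).card = j + 1 := by
  classical
  obtain ⟨hU, hi, hj⟩ := mem_XX.1 hz'
  rw [← hj]
  symm
  apply Finset.card_bij (fun e _ => z'.erase e)
  · intro e he
    rw [Finset.mem_sdiff] at he
    rw [Finset.mem_filter]
    refine ⟨mem_XX.2 ⟨(Finset.erase_subset _ _).trans hU, ?_, ?_⟩,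
      Finset.erase_ssubset he.1⟩
    · have : Finset.Icc 1 p \ z'.erase e = Finset.Icc 1 p \ z' := by
        ext x
        simp only [Finset.mem_sdiff, Finset.mem_erase, not_and]
        constructor
        · rintro ⟨h1, h2⟩
          refine ⟨h1, fun hx => ?_⟩
          by_cases hxe : x = e
          · exact absurd (hxe ▸ h1) he.2
          · exact absurd hx (h2 hxe)
        · rintro ⟨h1, h2⟩
          exact ⟨h1, fun _ h => h2 h⟩
      rw [this, hi]
    · have : z'.erase e \ Finset.Icc 1 p = (z' \ Finset.Icc 1 p).erase e := by
        ext x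
        simp only [Finset.mem_sdiff, Finset.mem_erase]
        tauto
      rw [this, Finset.card_erase_of_mem (Finset.mem_sdiff.2 ⟨he.1, he.2⟩), hj]
      omega
  · intro e1 h1 e2 h2 heq
    by_contra hne
    have h3 : e1 ∈ z'.erase e2 :=
      Finset.mem_erase.2 ⟨hne, (Finset.mem_sdiff.1 h1).1⟩
    rw [← heq] at h3
    exact (Finset.mem_erase.1 h3).1 rfl
  · intro z hzf
    rw [Finset.mem_filter] at hzf
    obtain ⟨hzX, hss⟩ := hzf
    have hczz : z.card + 1 = z'.card := by
      have h1 := XX_card_eq p q hzX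
      have h2 := XX_card_eq p q hz'
      omega
    obtain ⟨e, he1, he2, he3⟩ := step_exists p q hzX hz' hss hczz
    have heP : e ∉ Finset.Icc 1 p := by
      intro heP
      obtain ⟨_, hiz, _⟩ := mem_XX.1 hzX
      have hzsub : Finset.Icc 1 p \ z' ⊆ Finset.Icc 1 p \ z :=
        fun x hx => Finset.mem_sdiff.2 ⟨(Finset.mem_sdiff.1 hx).1,
          fun hxz => (Finset.mem_sdiff.1 hx).2 (hss.subset hxz)⟩
      have heqd : Finset.Icc 1 p \ z' = Finset.Icc 1 p \ z :=
        Finset.eq_of_subset_of_card_le hzsub (by rw [hiz, hi])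
      have : e ∈ Finset.Icc 1 p \ z' := by
        rw [heqd, Finset.mem_sdiff]; exact ⟨heP, he2⟩
      exact (Finset.mem_sdiff.1 this).2 he1
    refine ⟨e, Finset.mem_sdiff.2 ⟨he1, heP⟩, ?_⟩
    rw [he3, Finset.erase_insert he2]

-- up-degree, P-type
lemma upP {i j : ℕ} {z : Finset ℕ} (hz : z ∈ XX p q (i+1) j) :
    ((XX p q i j).filter (fun z' => z ⊂ z')).card = i + 1 := by
  classical
  obtain ⟨hU, hi, hj⟩ := mem_XX.1 hz
  rw [← hi]
  symm
  apply Finset.card_bij (fun e _ => insert e z)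
  · intro e he
    rw [Finset.mem_sdiff] at he
    rw [Finset.mem_filter]
    refine ⟨mem_XX.2 ⟨?_, ?_, ?_⟩, Finset.ssubset_insert he.2⟩
    · intro x hx
      rcases Finset.mem_insert.1 hx with rfl | h
      · exact P_subset_U p q he.1
      · exact hU h
    · have : Finset.Icc 1 p \ insert e z = (Finset.Icc 1 p \ z).erase e := by
        ext x
        simp only [Finset.mem_sdiff, Finset.mem_erase, Finset.mem_insert, not_or]
        tauto
      rw [this, Finset.card_erase_of_mem (Finset.mem_sdiff.2 he), hi]
      omega
    · have : insert e z \ Finset.Icc 1 p = z \ Finset.Icc 1 p := by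
        ext x
        simp only [Finset.mem_sdiff, Finset.mem_insert]
        constructor
        · rintro ⟨rfl | h, h2⟩
          · exact absurd he.1 h2
          · exact ⟨h, h2⟩
        · rintro ⟨h1, h2⟩
          exact ⟨Or.inr h1, h2⟩
      rw [this, hj]
  · intro e1 h1 e2 h2 heq
    have he1z : e1 ∉ z := (Finset.mem_sdiff.1 h1).2
    by_contra hne
    have : e1 ∈ insert e2 z := heq ▸ Finset.mem_insert_self e1 z
    rcases Finset.mem_insert.1 this with h | h
    · exact hne h
    · exact he1z h
  · intro z' hzf
    rw [Finset.mem_filter] at hzf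
    obtain ⟨hzX, hss⟩ := hzf
    have hczz : z.card + 1 = z'.card := by
      have h1 := XX_card_eq p q hzX
      have h2 := XX_card_eq p q hz
      omega
    obtain ⟨e, he1, he2, he3⟩ := step_exists p q hz hzX hss hczz
    have heP : e ∈ Finset.Icc 1 p := by
      by_contra heP
      obtain ⟨_, _, hjz⟩ := mem_XX.1 hzX
      have hzsub : z \ Finset.Icc 1 p ⊆ z' \ Finset.Icc 1 p :=
        fun x hx => Finset.mem_sdiff.2 ⟨hss.subset (Finset.mem_sdiff.1 hx).1,
          (Finset.mem_sdiff.1 hx).2⟩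
      have heqd : z \ Finset.Icc 1 p = z' \ Finset.Icc 1 p :=
        Finset.eq_of_subset_of_card_le hzsub (by rw [hjz, hj])
      have : e ∈ z \ Finset.Icc 1 p := by
        rw [heqd, Finset.mem_sdiff]; exact ⟨he1, heP⟩
      exact he2 (Finset.mem_sdiff.1 this).1
    exact ⟨e, Finset.mem_sdiff.2 ⟨heP, he2⟩, he3.symm⟩

-- up-degree, Q-type
lemma upQ {i j : ℕ} {z : Finset ℕ} (hz : z ∈ XX p q i j) :
    ((XX p q i (j+1)).filter (fun z' => z ⊂ z')).card = q - j := by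
  classical
  obtain ⟨hU, hi, hj⟩ := mem_XX.1 hz
  set Q' := Finset.Icc 1 (p+q) \ Finset.Icc 1 p with hQ'
  have hQcard : Q'.card = q := by
    rw [hQ', Finset.card_sdiff_of_subset (P_subset_U p q), Nat.card_Icc, Nat.card_Icc]
    omega
  have hQz : (Q' ∩ z).card = j := by
    rw [← hj]
    congr 1
    ext x
    simp only [hQ', Finset.mem_inter, Finset.mem_sdiff]
    exact ⟨fun h => ⟨h.2, h.1.2⟩, fun h => ⟨⟨hU h.1, h.2⟩, h.1⟩⟩
  have hcount : (Q' \ z).card = q - j := by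
    have := Finset.card_sdiff_add_card_inter Q' z
    omega
  rw [← hcount]
  symm
  apply Finset.card_bij (fun e _ => insert e z)
  · intro e he
    rw [Finset.mem_sdiff] at he
    have heU : e ∈ Finset.Icc 1 (p+q) := (Finset.mem_sdiff.1 he.1).1
    have hePn : e ∉ Finset.Icc 1 p := (Finset.mem_sdiff.1 he.1).2
    rw [Finset.mem_filter]
    refine ⟨mem_XX.2 ⟨?_, ?_, ?_⟩, Finset.ssubset_insert he.2⟩
    · intro x hx
      rcases Finset.mem_insert.1 hx with rfl | h
      · exact heU
      · exact hU h
    · have : Finset.Icc 1 p \ insert e z = Finset.Icc 1 p \ z := by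
        ext x
        simp only [Finset.mem_sdiff, Finset.mem_insert, not_or]
        constructor
        · rintro ⟨h1, _, h3⟩
          exact ⟨h1, h3⟩
        · rintro ⟨h1, h2⟩
          exact ⟨h1, fun hxe => hePn (hxe ▸ h1), h2⟩
      rw [this, hi]
    · have : insert e z \ Finset.Icc 1 p = insert e (z \ Finset.Icc 1 p) := by
        ext x
        simp only [Finset.mem_sdiff, Finset.mem_insert]
        constructor
        · rintro ⟨rfl | h1, h2⟩
          · exact Or.inl rfl
          · exact Or.inr ⟨h1, h2⟩
        · rintro (rfl | ⟨h1, h2⟩)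
          · exact ⟨Or.inl rfl, hePn⟩
          · exact ⟨Or.inr h1, h2⟩
      rw [this, Finset.card_insert_of_notMem (by simp [he.2]), hj]
  · intro e1 h1 e2 h2 heq
    have he1z : e1 ∉ z := (Finset.mem_sdiff.1 h1).2
    by_contra hne
    have : e1 ∈ insert e2 z := heq ▸ Finset.mem_insert_self e1 z
    rcases Finset.mem_insert.1 this with h | h
    · exact hne h
    · exact he1z h
  · intro z' hzf
    rw [Finset.mem_filter] at hzf
    obtain ⟨hzX, hss⟩ := hzf
    obtain ⟨hU', hi', hj'⟩ := mem_XX.1 hzX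
    have hczz : z.card + 1 = z'.card := by
      have h1 := XX_card_eq p q hzX
      have h2 := XX_card_eq p q hz
      omega
    obtain ⟨e, he1, he2, he3⟩ := step_exists p q hz hzX hss hczz
    have hePn : e ∉ Finset.Icc 1 p := by
      intro heP
      have hzsub : Finset.Icc 1 p \ z' ⊆ Finset.Icc 1 p \ z :=
        fun x hx => Finset.mem_sdiff.2 ⟨(Finset.mem_sdiff.1 hx).1,
          fun hxz => (Finset.mem_sdiff.1 hx).2 (hss.subset hxz)⟩
      have heqd : Finset.Icc 1 p \ z' = Finset.Icc 1 p \ z :=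
        Finset.eq_of_subset_of_card_le hzsub (by rw [hi', hi])
      have : e ∈ Finset.Icc 1 p \ z' := by
        rw [heqd, Finset.mem_sdiff]; exact ⟨heP, he2⟩
      exact (Finset.mem_sdiff.1 this).2 he1
    refine ⟨e, Finset.mem_sdiff.2 ⟨Finset.mem_sdiff.2 ⟨hU' he1, hePn⟩, he2⟩, he3.symm⟩

end Degrees


section Cascade

variable {A : Finset (Finset ℕ)} {L : ℕ → Finset (Finset ℕ)} {d u : ℕ → ℕ} {T : ℕ}

lemma cascade (hanti : IsAntichain (· ⊆ ·) (A : Set (Finset ℕ)))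
    (Hd : ∀ m < T, ∀ z' ∈ L (m+1), ((L m).filter (fun z => z ⊂ z')).card = d m)
    (Hu : ∀ m < T, ∀ z ∈ L m, ((L (m+1)).filter (fun z' => z ⊂ z')).card = u m)
    (Hpos : ∀ m < T, (L (m+1)).Nonempty → u m ≠ 0)
    (Hint : ∀ m1 m2 m3, m1 ≤ m2 → m2 ≤ m3 → m3 ≤ T →
      (L m1).Nonempty → (L m3).Nonempty → (L m2).Nonempty) :
    ∑ m ∈ Finset.range (T+1), ((A ∩ L m).card : ℚ) / ((L m).card : ℚ) ≤ 1 := by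
  classical
  set g : ℕ → ℚ := fun m => ((A ∩ L m).card : ℚ) / ((L m).card : ℚ) with hg
  have key : ∀ s m, m + s = T → ∃ B : Finset (Finset ℕ), B ⊆ L m ∧
      (∀ z ∈ B, ∃ a ∈ A, z ⊆ a) ∧
      ∑ m' ∈ Finset.Icc m T, g m' ≤
        (if (L m).card = 0 then (1:ℚ) else (B.card : ℚ) / ((L m).card : ℚ)) := by
    intro s
    induction s with
    | zero =>
      intro m hm
      have hmT : m = T := by omega
      subst hmT
      refine ⟨A ∩ L m, Finset.inter_subset_right, fun z hz => ⟨z, (Finset.mem_inter.1 hz).1,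
        subset_rfl⟩, ?_⟩
      rw [Finset.Icc_self, Finset.sum_singleton]
      by_cases h0 : (L m).card = 0
      · rw [if_pos h0, hg]
        simp only [h0, Nat.cast_zero, div_zero]
        exact zero_le_one
      · rw [if_neg h0]
    | succ s ih =>
      intro m hm
      have hmT : m < T := by omega
      obtain ⟨B', hB'sub, hB'below, hB'bound⟩ := ih (m+1) (by omega)
      have hsplit : Finset.Icc m T = insert m (Finset.Icc (m+1) T) := by
        ext x
        simp only [Finset.mem_Icc, Finset.mem_insert]
        omega
      have hnm : m ∉ Finset.Icc (m+1) T := by simp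
      have hB'le1 : ∑ m' ∈ Finset.Icc (m+1) T, g m' ≤ 1 := by
        refine hB'bound.trans ?_
        by_cases h0 : (L (m+1)).card = 0
        · rw [if_pos h0]
        · rw [if_neg h0]
          rw [div_le_one (by exact_mod_cast Nat.pos_of_ne_zero h0)]
          exact_mod_cast Finset.card_le_card hB'sub
      by_cases h0 : (L m).card = 0
      · refine ⟨∅, Finset.empty_subset _, by simp, ?_⟩
        rw [if_pos h0, hsplit, Finset.sum_insert hnm]
        have hgm : g m = 0 := by
          rw [hg]
          simp only [h0, Nat.cast_zero, div_zero]
        rw [hgm, zero_add]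
        exact hB'le1
      · by_cases h1 : (L (m+1)).card = 0
        · -- all layers above m are empty
          refine ⟨A ∩ L m, Finset.inter_subset_right, fun z hz => ⟨z,
            (Finset.mem_inter.1 hz).1, subset_rfl⟩, ?_⟩
          rw [if_neg h0, hsplit, Finset.sum_insert hnm]
          have hzero : ∑ m' ∈ Finset.Icc (m+1) T, g m' = 0 := by
            apply Finset.sum_eq_zero
            intro m' hm'
            rw [Finset.mem_Icc] at hm'
            have hLm' : (L m').card = 0 := by
              by_contra hc
              have hne' : (L m').Nonempty := Finset.card_pos.1 (Nat.pos_of_ne_zero hc)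
              have hnem : (L m).Nonempty := Finset.card_pos.1 (Nat.pos_of_ne_zero h0)
              have := Hint m (m+1) m' (by omega) hm'.1 hm'.2 hnem hne'
              exact Finset.card_ne_zero_of_mem this.choose_spec h1
            rw [hg]
            simp only [hLm', Nat.cast_zero, div_zero]
          rw [hzero, add_zero, hg]
        · -- main step
          have hne1 : (L (m+1)).Nonempty := Finset.card_pos.1 (Nat.pos_of_ne_zero h1)
          have hu : u m ≠ 0 := Hpos m hmT hne1
          -- edge equation
          have hedge : (L (m+1)).card * d m = (L m).card * u m := by
            apply Finset.card_mul_eq_card_mul (fun z' z => z ⊂ z')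
            · intro z' hz'
              rw [Finset.bipartiteAbove]
              exact Hd m hmT z' hz'
            · intro z hz
              rw [Finset.bipartiteBelow]
              exact Hu m hmT z hz
          have hd : d m ≠ 0 := by
            intro hd0
            rw [hd0, Nat.mul_zero] at hedge
            exact h0 (by
              rcases Nat.mul_eq_zero.1 hedge.symm with h | h
              · exact h
              · exact absurd h hu)
          set sh := (L m).filter (fun z => ∃ z' ∈ B', z ⊂ z') with hsh
          have hshineq : B'.card * d m ≤ sh.card * u m := by
            apply Finset.card_mul_le_card_mul (fun z' z => z ⊂ z')
            · intro z' hz'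
              rw [Finset.bipartiteAbove]
              rw [← Hd m hmT z' (hB'sub hz')]
              apply Finset.card_le_card
              intro z hzf
              rw [Finset.mem_filter] at hzf ⊢
              exact ⟨Finset.mem_filter.2 ⟨hzf.1, ⟨z', hz', hzf.2⟩⟩, hzf.2⟩
            · intro z hz
              rw [Finset.bipartiteBelow]
              rw [← Hu m hmT z (Finset.mem_filter.1 hz).1]
              apply Finset.card_le_card
              intro z' hzf
              rw [Finset.mem_filter] at hzf ⊢
              exact ⟨hB'sub hzf.1, hzf.2⟩
          have hkey : B'.card * (L m).card ≤ sh.card * (L (m+1)).card := by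
            have h2 : B'.card * (L m).card * u m ≤ sh.card * (L (m+1)).card * u m := by
              calc B'.card * (L m).card * u m = B'.card * ((L m).card * u m) := by ring
                _ = B'.card * ((L (m+1)).card * d m) := by rw [hedge]
                _ = B'.card * d m * (L (m+1)).card := by ring
                _ ≤ sh.card * u m * (L (m+1)).card :=
                    Nat.mul_le_mul_right _ hshineq
                _ = sh.card * (L (m+1)).card * u m := by ring
            exact Nat.le_of_mul_le_mul_right h2 (Nat.pos_of_ne_zero hu)
          have hLm_pos : (0:ℚ) < ((L m).card : ℚ) := by
            exact_mod_cast Nat.pos_of_ne_zero h0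
          have hLm1_pos : (0:ℚ) < ((L (m+1)).card : ℚ) := by
            exact_mod_cast Nat.pos_of_ne_zero h1
          have hdiv : (B'.card : ℚ) / ((L (m+1)).card : ℚ) ≤ (sh.card : ℚ) / ((L m).card : ℚ) := by
            rw [div_le_div_iff₀ hLm1_pos hLm_pos]
            exact_mod_cast hkey
          have hdisj : Disjoint (A ∩ L m) sh := by
            rw [Finset.disjoint_left]
            intro z hz1 hz2
            rw [Finset.mem_filter] at hz2
            obtain ⟨z', hz'B', hss⟩ := hz2.2
            obtain ⟨a, haA, hza⟩ := hB'below z' hz'B'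
            have hza2 : z ⊂ a := hss.trans_subset hza
            exact hanti (Finset.mem_coe.2 (Finset.mem_inter.1 hz1).1) (Finset.mem_coe.2 haA)
              hza2.ne hza2.subset
          refine ⟨(A ∩ L m) ∪ sh, Finset.union_subset Finset.inter_subset_right
            (Finset.filter_subset _ _), ?_, ?_⟩
          · intro z hz
            rcases Finset.mem_union.1 hz with h | h
            · exact ⟨z, (Finset.mem_inter.1 h).1, subset_rfl⟩
            · rw [Finset.mem_filter] at h
              obtain ⟨z', hz'B', hss⟩ := h.2
              obtain ⟨a, haA, hza⟩ := hB'below z' hz'B'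
              exact ⟨a, haA, (hss.trans_subset hza).subset⟩
          · rw [if_neg h0, hsplit, Finset.sum_insert hnm,
              Finset.card_union_of_disjoint hdisj]
            have : g m = ((A ∩ L m).card : ℚ) / ((L m).card : ℚ) := rfl
            rw [this]
            push_cast
            rw [add_div]
            gcongr
            exact hB'bound.trans ((if_neg h1) ▸ hdiv)
  obtain ⟨B, hBsub, _, hBbound⟩ := key T 0 (by omega)
  have hIcc : Finset.Icc 0 T = Finset.range (T+1) := by
    ext x
    simp only [Finset.mem_Icc, Finset.mem_range]
    omega
  rw [← hIcc]
  refine hBbound.trans ?_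
  by_cases h0 : (L 0).card = 0
  · rw [if_pos h0]
  · rw [if_neg h0]
    rw [div_le_one (by exact_mod_cast Nat.pos_of_ne_zero h0)]
    exact_mod_cast Finset.card_le_card hBsub

end Cascade


lemma choose_mono_mid {n a : ℕ} (h : 2*a+1 ≤ n) : n.choose a ≤ n.choose (a+1) := by
  have hid := Nat.choose_succ_right_eq n a
  have h1 : n.choose a * (a+1) ≤ n.choose (a+1) * (a+1) := by
    rw [hid]
    exact Nat.mul_le_mul_left _ (by omega)
  exact Nat.le_of_mul_le_mul_right h1 (by omega)

lemma group_bound (p q k : ℕ) (hk : 2*k ≤ p + q) (A : Finset (Finset ℕ))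
    (hanti : IsAntichain (· ⊆ ·) (A : Set (Finset ℕ)))
    (hAY : ∀ S ∈ A, S ⊆ Finset.Icc 1 (p+q) ∧
      ((Finset.Icc 1 p \ S).card + (S \ Finset.Icc 1 p).card = k ∨
       (Finset.Icc 1 p \ S).card + (S \ Finset.Icc 1 p).card + 1 = k)) :
    A.card ≤ (Finset.range (k+1)).sup (fun i => p.choose i * q.choose (k - i)) := by
  classical
  set W := (Finset.range (k+1)).sup (fun i => p.choose i * q.choose (k - i)) with hW
  set L : ℕ → Finset (Finset ℕ) := fun m => XX p q (k - (m+1)/2) (m/2) with hL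
  have hLE : ∀ t, L (2*t) = XX p q (k - t) t := by
    intro t
    show XX p q (k - (2*t+1)/2) ((2*t)/2) = _
    rw [show (2*t+1)/2 = t from by omega, show (2*t)/2 = t from by omega]
  have hLO : ∀ t, L (2*t+1) = XX p q (k - (t+1)) t := by
    intro t
    show XX p q (k - (2*t+1+1)/2) ((2*t+1)/2) = _
    rw [show (2*t+1+1)/2 = t+1 from by omega, show (2*t+1)/2 = t from by omega]
  -- covering
  have hcover : A ⊆ (Finset.range (2*k+1)).biUnion (fun m => A ∩ L m) := by
    intro S hS
    obtain ⟨hSU, hij⟩ := hAY S hS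
    rw [Finset.mem_biUnion]
    rcases hij with h | h
    · refine ⟨2 * (S \ Finset.Icc 1 p).card, Finset.mem_range.2 (by omega),
        Finset.mem_inter.2 ⟨hS, ?_⟩⟩
      rw [hLE]
      exact mem_XX.2 ⟨hSU, by omega, rfl⟩
    · refine ⟨2 * (S \ Finset.Icc 1 p).card + 1, Finset.mem_range.2 (by omega),
        Finset.mem_inter.2 ⟨hS, ?_⟩⟩
      rw [hLO]
      exact mem_XX.2 ⟨hSU, by omega, rfl⟩
  -- layer sizes bounded by W
  have hlayer : ∀ m ≤ 2*k, (L m).Nonempty → (L m).card ≤ W := by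
    intro m hm hne
    have hcard : (L m).card = p.choose (k - (m+1)/2) * q.choose (m/2) := XX_card p q _ _
    obtain ⟨hip, hjq⟩ := (XX_nonempty_iff p q _ _).1 hne
    by_cases hpar : m % 2 = 0
    · -- even : i + j = k
      have e1 : k - (m+1)/2 = k - m/2 := by omega
      have htk : m/2 ≤ k := by omega
      rw [hcard, e1]
      have e2 : q.choose (m/2) = q.choose (k - (k - m/2)) := by congr 1; omega
      rw [e2]
      exact Finset.le_sup (f := fun i => p.choose i * q.choose (k - i))
        (Finset.mem_range.2 (by omega : k - m/2 < k + 1))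
    · -- odd : i + j = k - 1
      set t := m/2 with ht
      have e1 : k - (m+1)/2 = k - t - 1 := by omega
      have htk : t + 1 ≤ k := by omega
      rw [hcard, e1]
      rw [e1] at hip
      have hsum : 2*(k - t - 1) + 2*t ≤ p + q - 2 := by omega
      by_cases hcase : 2*(k - t - 1) + 1 ≤ p
      · have h1 : p.choose (k-t-1) * q.choose t ≤ p.choose (k-t-1+1) * q.choose t :=
          Nat.mul_le_mul_right _ (choose_mono_mid hcase)
        refine h1.trans ?_
        have e2 : q.choose t = q.choose (k - (k-t-1+1)) := by congr 1; omega
        rw [e2]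
        exact Finset.le_sup (f := fun i => p.choose i * q.choose (k - i))
          (Finset.mem_range.2 (by omega : k-t-1+1 < k + 1))
      · have hq2 : 2*t+1 ≤ q := by omega
        have h1 : p.choose (k-t-1) * q.choose t ≤ p.choose (k-t-1) * q.choose (t+1) :=
          Nat.mul_le_mul_left _ (choose_mono_mid hq2)
        refine h1.trans ?_
        have e2 : q.choose (t+1) = q.choose (k - (k-t-1)) := by congr 1; omega
        rw [e2]
        exact Finset.le_sup (f := fun i => p.choose i * q.choose (k - i))
          (Finset.mem_range.2 (by omega : k-t-1 < k + 1))
  -- the cascade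
  have hcas : ∑ m ∈ Finset.range (2*k+1), ((A ∩ L m).card : ℚ) / ((L m).card : ℚ) ≤ 1 := by
    apply cascade hanti
      (d := fun m => if m % 2 = 0 then p - (k - m/2 - 1) else m/2 + 1)
      (u := fun m => if m % 2 = 0 then k - m/2 else q - m/2)
    · -- Hd
      intro m hm z' hz'
      by_cases hpar : m % 2 = 0
      · set t := m/2 with ht
        have hmeq : m = 2*t := by omega
        have htk : t < k := by omega
        rw [hmeq] at hz' ⊢
        rw [hLO t] at hz'
        rw [hLE t, show k - t = (k - (t+1)) + 1 from by omega, downP p q hz']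
        rw [if_pos (by omega : (2*t) % 2 = 0)]
        omega
      · set t := m/2 with ht
        have hmeq : m = 2*t+1 := by omega
        rw [hmeq] at hz' ⊢
        rw [show 2*t+1+1 = 2*(t+1) from by omega, hLE (t+1)] at hz'
        rw [show k - (t+1) = k - t - 1 from by omega] at hz'
        rw [hLO t, show k - (t+1) = k - t - 1 from by omega, downQ p q hz',
          if_neg (by omega : ¬ (2*t+1) % 2 = 0)]
    · -- Hu
      intro m hm z hz
      by_cases hpar : m % 2 = 0
      · set t := m/2 with ht
        have hmeq : m = 2*t := by omega
        have htk : t < k := by omega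
        rw [hmeq] at hz ⊢
        rw [hLE t, show k - t = (k - (t+1)) + 1 from by omega] at hz
        rw [hLO t, upP p q hz]
        rw [if_pos (by omega : (2*t) % 2 = 0)]
        omega
      · set t := m/2 with ht
        have hmeq : m = 2*t+1 := by omega
        rw [hmeq] at hz ⊢
        rw [hLO t] at hz
        rw [show 2*t+1+1 = 2*(t+1) from by omega, hLE (t+1),
          show k - (t+1) = k - (t+1) from rfl]
        rw [upQ p q hz, if_neg (by omega : ¬ (2*t+1) % 2 = 0)]
    · -- Hpos
      intro m hm hne
      by_cases hpar : m % 2 = 0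
      · rw [if_pos hpar]
        omega
      · rw [if_neg hpar]
        set t := m/2 with ht
        have hmeq : m = 2*t+1 := by omega
        rw [hmeq, show 2*t+1+1 = 2*(t+1) from by omega, hLE (t+1)] at hne
        have := (XX_nonempty_iff p q _ _).1 hne
        omega
    · -- Hint
      intro m1 m2 m3 h12 h23 h3T hne1 hne3
      rw [hL] at hne1 hne3 ⊢
      rw [XX_nonempty_iff] at hne1 hne3 ⊢
      omega
  -- assembling
  have hstep1 : A.card ≤ ∑ m ∈ Finset.range (2*k+1), (A ∩ L m).card :=
    (Finset.card_le_card hcover).trans (Finset.card_biUnion_le)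
  have hstep2 : (∑ m ∈ Finset.range (2*k+1), ((A ∩ L m).card : ℚ)) ≤ W := by
    have hterm : ∀ m ∈ Finset.range (2*k+1), ((A ∩ L m).card : ℚ) ≤
        (((A ∩ L m).card : ℚ) / ((L m).card : ℚ)) * W := by
      intro m hm
      by_cases h0 : (L m).card = 0
      · have : A ∩ L m = ∅ := by
          rw [← Finset.subset_empty, ← Finset.card_eq_zero.1 h0]
          · exact Finset.inter_subset_right
        rw [this]
        simp
      · have hpos : (0:ℚ) < ((L m).card : ℚ) := by exact_mod_cast Nat.pos_of_ne_zero h0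
        rw [div_mul_eq_mul_div, le_div_iff₀ hpos]
        have hcle : (A ∩ L m).card ≤ (L m).card :=
          Finset.card_le_card Finset.inter_subset_right
        have hLW : (L m).card ≤ W := by
          apply hlayer m (by rw [Finset.mem_range] at hm; omega)
          exact Finset.card_pos.1 (Nat.pos_of_ne_zero h0)
        calc ((A ∩ L m).card : ℚ) * ((L m).card : ℚ)
            ≤ ((A ∩ L m).card : ℚ) * (W : ℚ) := by
              apply mul_le_mul_of_nonneg_left (by exact_mod_cast hLW) (by positivity)
          _ = ((A ∩ L m).card : ℚ) * (W : ℚ) := rfl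
      
    calc (∑ m ∈ Finset.range (2*k+1), ((A ∩ L m).card : ℚ))
        ≤ ∑ m ∈ Finset.range (2*k+1), (((A ∩ L m).card : ℚ) / ((L m).card : ℚ)) * W :=
          Finset.sum_le_sum hterm
      _ = (∑ m ∈ Finset.range (2*k+1), ((A ∩ L m).card : ℚ) / ((L m).card : ℚ)) * W := by
          rw [Finset.sum_mul]
      _ ≤ 1 * W := by
          apply mul_le_mul_of_nonneg_right hcas (by positivity)
      _ = W := one_mul _
  have : (A.card : ℚ) ≤ (W : ℚ) := by
    refine le_trans ?_ hstep2
    exact_mod_cast hstep1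
  exact_mod_cast this


end Stmt9

/-- For `2r ≤ p + q`, every antichain contained in the ball `B_r[p,q]` has size at most
the sum of the widths of the spheres of radii `r, r-2, r-4, …`, where the width of the
sphere of radius `k` equals the size of its largest layer `max { C(p,i)*C(q,j) : i+j = k }`. -/
theorem stmt_9 (p q r : ℕ) (hr : 2 * r ≤ p + q)
    (A : Finset (Finset ℕ))
    (hA : ∀ x ∈ A, x ⊆ Finset.Icc 1 (p + q) ∧
      (Finset.Icc 1 p \ x).card + (x \ Finset.Icc 1 p).card ≤ r)
    (hanti : IsAntichain (· ⊆ ·) (A : Set (Finset ℕ))) :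
    A.card ≤ ∑ l ∈ Finset.range (r / 2 + 1),
      (Finset.range (r - 2 * l + 1)).sup
        (fun i => Nat.choose p i * Nat.choose q (r - 2 * l - i)) := by
  classical
  set dist : Finset ℕ → ℕ :=
    fun S => (Finset.Icc 1 p \ S).card + (S \ Finset.Icc 1 p).card with hdist
  have hcover : A ⊆ (Finset.range (r/2+1)).biUnion
      (fun l => A.filter (fun S => (r - dist S)/2 = l)) := by
    intro S hS
    rw [Finset.mem_biUnion]
    refine ⟨(r - dist S)/2, Finset.mem_range.2 ?_, Finset.mem_filter.2 ⟨hS, rfl⟩⟩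
    have h2 := (hA S hS).2
    have h3 : dist S = (Finset.Icc 1 p \ S).card + (S \ Finset.Icc 1 p).card := rfl
    omega
  have hgroup : ∀ l ∈ Finset.range (r/2+1),
      (A.filter (fun S => (r - dist S)/2 = l)).card ≤
      (Finset.range (r - 2*l + 1)).sup
        (fun i => Nat.choose p i * Nat.choose q (r - 2*l - i)) := by
    intro l hl
    rw [Finset.mem_range] at hl
    apply Stmt9.group_bound p q (r - 2*l) (by omega)
    · exact hanti.subset (by intro x hx; exact Finset.mem_of_mem_filter x hx)
    · intro S hS
      rw [Finset.mem_filter] at hS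
      obtain ⟨hSA, hSl⟩ := hS
      obtain ⟨hSU, hSd⟩ := hA S hSA
      refine ⟨hSU, ?_⟩
      have h3 : dist S = (Finset.Icc 1 p \ S).card + (S \ Finset.Icc 1 p).card := rfl
      omega
  calc A.card ≤ ((Finset.range (r/2+1)).biUnion
        (fun l => A.filter (fun S => (r - dist S)/2 = l))).card :=
        Finset.card_le_card hcover
    _ ≤ ∑ l ∈ Finset.range (r/2+1), (A.filter (fun S => (r - dist S)/2 = l)).card :=
        Finset.card_biUnion_le
    _ ≤ _ := Finset.sum_le_sum hgroup
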